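/- Let (Ω, μ) be a measure space, p a natural number, N > 0, and A : Ω → ℝ a measurable function with A > 0 a.e. and 0 < ∫_Ω A^{1/(p+2)} dμ < ∞. Define d*(x) = N · A(x)^{1/(p+2)} / ∫_Ω A^{1/(p+2)} dμ. If d : Ω → ℝ is measurable with d > 0 a.e., ∫_Ω d dμ = N, and ∫_Ω A · d^{−(p+1)} dμ = ∫_Ω A · (d*)^{−(p+1)} dμ < ∞, then d = d* almost everywhere; i.e. the optimal density distribution is the unique minimizer of the continuous error estimate at fixed complexity. -/

import Mathlib

open MeasureTheory


open MeasureTheory Real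

lemma bern_aux {s u : ℝ} (hs : 1 ≤ s) (hu : 0 < u) :
    1 + s * (1/u - 1) ≤ u ^ (-s) := by
  have hv : (-1:ℝ) ≤ 1/u - 1 := by
    have : 0 < 1/u := by positivity
    linarith
  have := one_add_mul_self_le_rpow_one_add hv hs
  have he : (1 + (1/u - 1)) = u⁻¹ := by field_simp; ring
  rw [he, Real.inv_rpow hu.le, ← Real.rpow_neg hu.le] at this
  exact this

lemma amgm_core {s u : ℝ} (hs : 1 ≤ s) (hu : 0 < u) :
    s + 1 ≤ u ^ (-s) + s * u := by
  have h1 := bern_aux hs hu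
  have huu : u * (1/u) = 1 := by field_simp
  nlinarith [sq_nonneg (u - 1), hu, mul_pos hu hu]

lemma amgm_core_strict {s u : ℝ} (hs : 1 ≤ s) (hu : 0 < u) (hne : u ≠ 1) :
    s + 1 < u ^ (-s) + s * u := by
  have h1 := bern_aux hs hu
  have huu : u * (1/u) = 1 := by field_simp
  have hsq : 0 < (u - 1)^2 := by
    have : u - 1 ≠ 0 := sub_ne_zero.mpr hne
    positivity
  have h2 : 2 < 1/u + u := by nlinarith [hsq, huu, hu]
  nlinarith [h1, h2, hs]

lemma key_identity {s a L t : ℝ} (hq : s + 1 ≠ 0) (ha : 0 < a) (hL : 0 < L) (ht : 0 < t) :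
    a * t ^ (-s) + s * L ^ (s+1) * t
      = L ^ s * a ^ (1/(s+1)) * ((t * L / a ^ (1/(s+1))) ^ (-s) + s * (t * L / a ^ (1/(s+1)))) := by
  set b := a ^ (1/(s+1)) with hbdef
  have hb : 0 < b := rpow_pos_of_pos ha _
  have hab : b ^ s * b = a := by
    rw [← Real.rpow_add_one hb.ne' s, hbdef, ← Real.rpow_mul ha.le,
      one_div_mul_cancel hq, Real.rpow_one]
  set u := t * L / b with hudef
  have hu : 0 < u := by positivity
  have hui : u⁻¹ = b * (t⁻¹ * L⁻¹) := by
    rw [hudef]; field_simp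
  have hus : u ^ (-s) = b ^ s * (t ^ (-s) * L ^ (-s)) := by
    rw [Real.rpow_neg hu.le, ← Real.inv_rpow hu.le, hui, Real.mul_rpow hb.le (by positivity),
      Real.mul_rpow (by positivity) (by positivity), Real.inv_rpow ht.le, Real.inv_rpow hL.le,
      ← Real.rpow_neg ht.le, ← Real.rpow_neg hL.le]
  have hPQ : L ^ s * L ^ (-s) = 1 := by
    rw [Real.rpow_neg hL.le, mul_inv_cancel₀ (rpow_pos_of_pos hL s).ne']
  have hL1 : L ^ (s+1) = L ^ s * L := Real.rpow_add_one hL.ne' s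
  have expand : L ^ s * b * (u ^ (-s) + s * u)
      = (L ^ s * L ^ (-s)) * ((b ^ s * b) * t ^ (-s)) + s * (L ^ s * L) * t := by
    rw [hus, hudef]; field_simp
  rw [expand, hPQ, hab, ← hL1, one_mul]

lemma pointwise_lower {s a L t : ℝ} (hs : 1 ≤ s) (ha : 0 < a) (hL : 0 < L) (ht : 0 < t) :
    (s+1) * L ^ s * a ^ (1/(s+1)) ≤ a * t ^ (-s) + s * L ^ (s+1) * t := by
  have hq : s + 1 ≠ 0 := by linarith
  rw [key_identity hq ha hL ht]
  have hu : 0 < t * L / a ^ (1/(s+1)) := by positivity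
  have hcore := amgm_core hs hu
  have hpos : (0:ℝ) < L ^ s * a ^ (1/(s+1)) := by positivity
  nlinarith [mul_le_mul_of_nonneg_left hcore hpos.le]

lemma pointwise_eqcase {s a L t : ℝ} (hs : 1 ≤ s) (ha : 0 < a) (hL : 0 < L) (ht : 0 < t)
    (h : a * t ^ (-s) + s * L ^ (s+1) * t = (s+1) * L ^ s * a ^ (1/(s+1))) :
    t = a ^ (1/(s+1)) / L := by
  have hq : s + 1 ≠ 0 := by linarith
  rw [key_identity hq ha hL ht] at h
  have hb : 0 < a ^ (1/(s+1)) := rpow_pos_of_pos ha _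
  have hu : 0 < t * L / a ^ (1/(s+1)) := by positivity
  by_contra htne
  have hune : t * L / a ^ (1/(s+1)) ≠ 1 := by
    intro h1
    apply htne
    field_simp at h1
    rw [eq_div_iff hL.ne']
    linarith
  have hcore := amgm_core_strict hs hu hune
  have hpos : (0:ℝ) < L ^ s * a ^ (1/(s+1)) := by positivity
  nlinarith [mul_lt_mul_of_pos_left hcore hpos]

lemma star_value {s a L : ℝ} (hq : s + 1 ≠ 0) (ha : 0 < a) (hL : 0 < L) :
    a * (a ^ (1/(s+1)) / L) ^ (-s) = L ^ s * a ^ (1/(s+1)) := by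
  set b := a ^ (1/(s+1)) with hbdef
  have hb : 0 < b := rpow_pos_of_pos ha _
  have hab : b ^ s * b = a := by
    rw [← Real.rpow_add_one hb.ne' s, hbdef, ← Real.rpow_mul ha.le,
      one_div_mul_cancel hq, Real.rpow_one]
  have h1 : (b / L) ^ (-s) = L ^ s / b ^ s := by
    rw [Real.rpow_neg (by positivity), Real.div_rpow hb.le hL.le, inv_div]
  rw [h1, ← hab]
  have hbs : (0:ℝ) < b ^ s := rpow_pos_of_pos hb _
  field_simp

/-- Uniqueness of the optimal mesh density: if a positive density `d` of complexity
`N` achieves the same (finite) value of the continuous error estimate as the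
optimal density `d*`, then `d = d*` almost everywhere. -/
theorem optimal_density_unique_minimizer
    {Ω : Type*} [MeasurableSpace Ω] (μ : Measure Ω) (p : ℕ) (N : ℝ) (hN : 0 < N)
    (A : Ω → ℝ) (hAmeas : Measurable A) (hApos : ∀ᵐ x ∂μ, 0 < A x)
    (hInt : Integrable (fun x => A x ^ (1 / (p + 2 : ℝ))) μ)
    (hIpos : 0 < ∫ x, A x ^ (1 / (p + 2 : ℝ)) ∂μ)
    (dstar : Ω → ℝ)
    (hdstar : ∀ x, dstar x =
      N * A x ^ (1 / (p + 2 : ℝ)) / ∫ y, A y ^ (1 / (p + 2 : ℝ)) ∂μ)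
    (d : Ω → ℝ) (hdmeas : Measurable d) (hdpos : ∀ᵐ x ∂μ, 0 < d x)
    (hdN : ∫ x, d x ∂μ = N)
    (hdInt : Integrable (fun x => A x * d x ^ (-(p + 1 : ℝ))) μ)
    (heq : ∫ x, A x * d x ^ (-(p + 1 : ℝ)) ∂μ =
      ∫ x, A x * dstar x ^ (-(p + 1 : ℝ)) ∂μ) :
    d =ᵐ[μ] dstar := by
  have e2 : ((p:ℝ) + 1) + 1 = (p:ℝ) + 2 := by ring
  have hq : ((p:ℝ) + 1) + 1 ≠ 0 := by rw [e2]; positivity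
  have hs1 : (1:ℝ) ≤ (p:ℝ) + 1 := by
    have : (0:ℝ) ≤ (p:ℝ) := Nat.cast_nonneg p
    linarith
  set I := ∫ x, A x ^ (1 / (p + 2 : ℝ)) ∂μ with hIdef
  set L := I / N with hLdef
  have hL : 0 < L := div_pos hIpos hN
  -- d is integrable
  have hdint : Integrable d μ := by
    by_contra h
    rw [integral_undef h] at hdN
    exact hN.ne' hdN.symm
  -- dstar rewritten
  have hdstar' : ∀ x, dstar x = A x ^ (1 / (p + 2 : ℝ)) / L := by
    intro x
    rw [hdstar x, hLdef, div_div_eq_mul_div]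
    ring
  -- value of the error at dstar
  have hstar_ae : (fun x => A x * dstar x ^ (-(p + 1 : ℝ)))
      =ᵐ[μ] (fun x => L ^ ((p:ℝ)+1) * A x ^ (1 / (p + 2 : ℝ))) := by
    filter_upwards [hApos] with x hA
    have := star_value (s := (p:ℝ)+1) hq hA hL
    rw [e2] at this
    rw [hdstar' x]
    exact this
  have hIstar : ∫ x, A x * dstar x ^ (-(p + 1 : ℝ)) ∂μ = L ^ ((p:ℝ)+1) * I := by
    rw [integral_congr_ae hstar_ae, integral_const_mul]
  have heq' : ∫ x, A x * d x ^ (-(p + 1 : ℝ)) ∂μ = L ^ ((p:ℝ)+1) * I := heq.trans hIstar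
  -- the gap function g
  set g : Ω → ℝ := fun x =>
    A x * d x ^ (-(p + 1 : ℝ)) + ((p:ℝ)+1) * L ^ ((p:ℝ)+2) * d x
      - ((p:ℝ)+2) * L ^ ((p:ℝ)+1) * A x ^ (1 / (p + 2 : ℝ)) with hgdef
  have hint2 : Integrable (fun x => ((p:ℝ)+1) * L ^ ((p:ℝ)+2) * d x) μ :=
    hdint.const_mul _
  have hint12 : Integrable
      (fun x => A x * d x ^ (-(p + 1 : ℝ)) + ((p:ℝ)+1) * L ^ ((p:ℝ)+2) * d x) μ :=
    hdInt.add hint2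
  have hint3 : Integrable
      (fun x => ((p:ℝ)+2) * L ^ ((p:ℝ)+1) * A x ^ (1 / (p + 2 : ℝ))) μ :=
    hInt.const_mul _
  have hgint : Integrable g μ := hint12.sub hint3
  have hgnn : 0 ≤ᵐ[μ] g := by
    filter_upwards [hApos, hdpos] with x hA hd
    have hlow := pointwise_lower (s := (p:ℝ)+1) hs1 hA hL hd
    rw [e2] at hlow
    have : (0:ℝ) ≤ g x := by
      simp only [hgdef]
      linarith
    exact this
  have hgzero : ∫ x, g x ∂μ = 0 := by
    simp only [hgdef]
    rw [integral_sub hint12 hint3, integral_add hdInt hint2,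
      integral_const_mul, integral_const_mul, hdN, heq', ← hIdef]
    have hL2 : L ^ ((p:ℝ)+2) = L ^ ((p:ℝ)+1) * L := by
      rw [← e2]; exact Real.rpow_add_one hL.ne' _
    have hLN : L * N = I := div_mul_cancel₀ I hN.ne'
    rw [hL2]
    linear_combination (((p:ℝ)+1) * L ^ ((p:ℝ)+1)) * hLN
  have hg0 : g =ᵐ[μ] 0 := (integral_eq_zero_iff_of_nonneg_ae hgnn hgint).mp hgzero
  filter_upwards [hg0, hApos, hdpos] with x hg hA hd
  have hgx : A x * d x ^ (-(p + 1 : ℝ)) + ((p:ℝ)+1) * L ^ ((p:ℝ)+2) * d x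
      = ((p:ℝ)+2) * L ^ ((p:ℝ)+1) * A x ^ (1 / (p + 2 : ℝ)) := by
    have h0 : g x = 0 := hg
    simp only [hgdef] at h0
    linarith
  rw [← e2] at hgx
  have hfin := pointwise_eqcase (s := (p:ℝ)+1) hs1 hA hL hd hgx
  rw [e2] at hfin
  rw [hfin, hdstar' x]
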